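/- The A-module M is a free ℂ[t]-module with basis consisting of the elements z̄₁ⁿ·s₁, z̄₂ⁿ·s₂, z̄₁ⁿθ̄₁·s₁, z̄₂ⁿθ̄₂·s₂ for all n ≥ 0, together with the single element s₀. -/

import Mathlib

open MvPolynomial

noncomputable section

/-- The polynomial ring `ℂ[t,z₁,z₂,θ₁,θ₂]`:
variables `X 0 = t`, `X 1 = z₁`, `X 2 = z₂`, `X 3 = θ₁`, `X 4 = θ₂`. -/
abbrev P5 : Type := MvPolynomial (Fin 5) ℂ

/-- The ideal `(z₁z₂ + t², z₁θ₂ − tθ₁, z₂θ₁ + tθ₂, θ₁θ₂, θ₁², θ₂²)` of relations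
of Deligne's miniversal deformation of the NS node. -/
def nsIdeal : Ideal P5 :=
  Ideal.span {X 1 * X 2 + X 0 ^ 2, X 1 * X 4 - X 0 * X 3, X 2 * X 3 + X 0 * X 4,
    X 3 * X 4, X 3 ^ 2, X 4 ^ 2}

/-- The coordinate ring `A` of Deligne's miniversal deformation of the NS node. -/
abbrev ANode : Type := P5 ⧸ nsIdeal

/-- `t̄ ∈ A`. -/
def tb : ANode := Ideal.Quotient.mk nsIdeal (X 0)
/-- `z̄₁ ∈ A`. -/
def z1 : ANode := Ideal.Quotient.mk nsIdeal (X 1)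
/-- `z̄₂ ∈ A`. -/
def z2 : ANode := Ideal.Quotient.mk nsIdeal (X 2)
/-- `θ̄₁ ∈ A`. -/
def th1 : ANode := Ideal.Quotient.mk nsIdeal (X 3)
/-- `θ̄₂ ∈ A`. -/
def th2 : ANode := Ideal.Quotient.mk nsIdeal (X 4)

/-- `A` as a `ℂ[t]`-algebra via `t ↦ t̄`. -/
instance : Algebra (Polynomial ℂ) ANode := (Polynomial.aeval tb).toRingHom.toAlgebra


set_option synthInstance.maxHeartbeats 400000
set_option maxHeartbeats 1000000

/-- The standard generators of the free module `A³`. -/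
def ee (i : Fin 3) : Fin 3 → ANode := Pi.single i 1

/-- The relation vectors defining the local model `M` of the dualizing sheaf `ω_{X/S}`:
generators `s₁ = ee 0`, `s₂ = ee 1`, `s₀ = ee 2`; relations `z₁s₂ = ts₁`, `z₂s₁ = −ts₂`,
`θ₁s₂ = ts₀`, `θ₂s₁ = ts₀`, `z₁s₀ = θ₁s₁`, `z₂s₀ = −θ₂s₂`, `θ₁s₀ = 0`, `θ₂s₀ = 0`. -/
def omegaRels : Set (Fin 3 → ANode) :=
  { z1 • ee 1 - tb • ee 0,
    z2 • ee 0 + tb • ee 1,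
    th1 • ee 1 - tb • ee 2,
    th2 • ee 0 - tb • ee 2,
    z1 • ee 2 - th1 • ee 0,
    z2 • ee 2 + th2 • ee 1,
    th1 • ee 2,
    th2 • ee 2 }

/-- The submodule of relations. -/
def omegaRelMod : Submodule ANode (Fin 3 → ANode) := Submodule.span ANode omegaRels

/-- The local model `M` of the relative dualizing sheaf `ω_{X/S}`. -/
abbrev M : Type := (Fin 3 → ANode) ⧸ omegaRelMod

/-- The generators of `M`: `s 0 = s₁`, `s 1 = s₂`, `s 2 = s₀`. -/
def s (i : Fin 3) : M := Submodule.Quotient.mk (ee i)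

/-- Index type for the `ℂ[t]`-basis: `s₀`; `z̄₁ⁿ·s₁ (n ≥ 0)`; `z̄₂ⁿ·s₂ (n ≥ 0)`;
`z̄₁ⁿθ̄₁·s₁ (n ≥ 0)`; `z̄₂ⁿθ̄₂·s₂ (n ≥ 0)`. -/
abbrev BasisIdx : Type := Unit ⊕ ℕ ⊕ ℕ ⊕ ℕ ⊕ ℕ

/-- The claimed `ℂ[t]`-basis of `M`. -/
def mBasis : BasisIdx → M
  | Sum.inl _ => s 2
  | Sum.inr (Sum.inl n) => z1 ^ n • s 0
  | Sum.inr (Sum.inr (Sum.inl n)) => z2 ^ n • s 1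
  | Sum.inr (Sum.inr (Sum.inr (Sum.inl n))) => (z1 ^ n * th1) • s 0
  | Sum.inr (Sum.inr (Sum.inr (Sum.inr n))) => (z2 ^ n * th2) • s 1



open LaurentPolynomial TrivSqZeroExt

set_option linter.unreachableTactic false
set_option linter.unusedTactic false

abbrev Ct := Polynomial ℂ
abbrev L := LaurentPolynomial Ct
abbrev R5 := TrivSqZeroExt L L
def tL : L := LaurentPolynomial.C (Polynomial.X : Ct)
def vv : Fin 5 → R5 := ![inl tL, inl (T 1), inl (-(tL^2) * T (-1)), inr (T 1), inr tL]
def phi : P5 →ₐ[ℂ] R5 := aeval vv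
lemma phi0 : phi (X 0) = inl tL := by rw [phi, aeval_X]; rfl
lemma phi1 : phi (X 1) = inl (T 1) := by rw [phi, aeval_X]; rfl
lemma phi2 : phi (X 2) = inl (-(tL^2) * T (-1)) := by rw [phi, aeval_X]; rfl
lemma phi3 : phi (X 3) = inr (T 1) := by rw [phi, aeval_X]; rfl
lemma phi4 : phi (X 4) = inr tL := by rw [phi, aeval_X]; rfl
lemma Tneg : (T (-1) * T 1 : L) = 1 := by rw [← T_add]; norm_num
lemma phi_vanish : ∀ a ∈ nsIdeal, phi a = 0 := by
  intro a ha
  refine (Ideal.span_le (I := RingHom.ker phi.toRingHom)).2 ?_ ha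
  rintro p hp
  simp only [Set.mem_insert_iff, Set.mem_singleton_iff] at hp
  have h1 : phi (X 1 * X 2 + X 0 ^ 2) = 0 := by
    rw [map_add, map_mul, map_pow, phi0, phi1, phi2, inl_pow, inl_mul_inl, ← inl_add,
      show (T 1 * (-tL ^ 2 * T (-1)) + tL ^ 2 : L) = -(tL^2) * (T (-1) * T 1) + tL ^2 by ring,
      Tneg]
    simp
  have h2 : phi (X 1 * X 4 - X 0 * X 3) = 0 := by
    rw [map_sub, map_mul, map_mul, phi0, phi1, phi3, phi4, inl_mul_inr, inl_mul_inr, ← inr_sub,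
      smul_eq_mul, smul_eq_mul, show (T 1 * tL - tL * T 1 : L) = 0 by ring]
    simp
  have h3 : phi (X 2 * X 3 + X 0 * X 4) = 0 := by
    rw [map_add, map_mul, map_mul, phi0, phi2, phi3, phi4, inl_mul_inr, inl_mul_inr, ← inr_add,
      smul_eq_mul, smul_eq_mul,
      show (-tL ^ 2 * T (-1) * T 1 + tL * tL : L) = -tL^2 * (T (-1) * T 1) + tL^2 by ring, Tneg]
    simp
  rcases hp with rfl|rfl|rfl|rfl|rfl|rfl
  · exact h1
  · exact h2
  · exact h3
  · show phi (X 3 * X 4) = 0; rw [map_mul, phi3, phi4, inr_mul_inr]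
  · show phi (X 3 ^ 2) = 0; rw [sq, map_mul, phi3, inr_mul_inr]
  · show phi (X 4 ^ 2) = 0; rw [sq, map_mul, phi4, inr_mul_inr]
def Phi : ANode →+* R5 := Ideal.Quotient.lift nsIdeal phi.toRingHom phi_vanish
lemma Phi_t : Phi tb = inl tL := phi0
lemma Phi_z1 : Phi z1 = inl (T 1) := phi1
lemma Phi_z2 : Phi z2 = inl (-(tL^2) * T (-1)) := phi2
lemma Phi_th1 : Phi th1 = inr (T 1) := phi3
lemma Phi_th2 : Phi th2 = inr tL := phi4
lemma Phi_algebraMap (p : Ct) : Phi (algebraMap Ct ANode p) = algebraMap Ct R5 p := by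
  have : Phi.comp (algebraMap Ct ANode) = algebraMap Ct R5 := by
    apply Polynomial.ringHom_ext
    · intro a
      have h1 : algebraMap Ct ANode (Polynomial.C a) = Ideal.Quotient.mk nsIdeal (C a) := by
        show Polynomial.aeval tb (Polynomial.C a) = _
        simp [Polynomial.aeval_C]
        rfl
      rw [RingHom.comp_apply, h1]
      show phi (C a) = _
      rw [algHom_C]
      rw [algebraMap_eq_inl']
      congr 1
    · show Phi (algebraMap Ct ANode Polynomial.X) = _
      have : algebraMap Ct ANode Polynomial.X = tb := by
        show Polynomial.aeval tb Polynomial.X = tb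
        simp
      rw [this, Phi_t, algebraMap_eq_inl']
      rfl
  exact DFunLike.congr_fun this p

lemma mk_mem (p : P5) (hp : p ∈ ({X 1 * X 2 + X 0 ^ 2, X 1 * X 4 - X 0 * X 3, X 2 * X 3 + X 0 * X 4,
    X 3 * X 4, X 3 ^ 2, X 4 ^ 2} : Set P5)) : Ideal.Quotient.mk nsIdeal p = 0 :=
  Ideal.Quotient.eq_zero_iff_mem.2 (Ideal.subset_span hp)

lemma Azz : z1 * z2 + tb ^ 2 = 0 := by
  have := mk_mem (X 1 * X 2 + X 0 ^ 2) (by simp)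
  simpa [tb, z1, z2] using this
lemma Az1th2 : z1 * th2 - tb * th1 = 0 := by
  have := mk_mem (X 1 * X 4 - X 0 * X 3) (by simp)
  simpa [tb, z1, th1, th2] using this
lemma Az2th1 : z2 * th1 + tb * th2 = 0 := by
  have := mk_mem (X 2 * X 3 + X 0 * X 4) (by simp)
  simpa [tb, z2, th1, th2] using this
lemma Athth : th1 * th2 = 0 := by
  have := mk_mem (X 3 * X 4) (by simp)
  simpa [th1, th2] using this
lemma Ath1sq : th1 * th1 = 0 := by
  have := mk_mem (X 3 ^ 2) (by simp)
  simpa [th1, sq] using this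
lemma Ath2sq : th2 * th2 = 0 := by
  have := mk_mem (X 4 ^ 2) (by simp)
  simpa [th2, sq] using this

def G0 : (Fin 3 → ANode) →ₗ[ANode] ANode where
  toFun f := f 0 * z1 + f 1 * tb + f 2 * th1
  map_add' f g := by simp only [Pi.add_apply]; ring
  map_smul' a f := by simp only [Pi.smul_apply, smul_eq_mul, RingHom.id_apply]; ring

lemma G0_rels : ∀ r ∈ omegaRels, G0 r = 0 := by
  rintro r hr
  rcases hr with rfl|rfl|rfl|rfl|rfl|rfl|rfl|rfl <;>
    simp only [G0, omegaRels, LinearMap.coe_mk, AddHom.coe_mk, Pi.sub_apply, Pi.add_apply,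
      Pi.smul_apply, ee, smul_eq_mul] <;>
    simp [Pi.single_apply] <;> ring_nf
  · linear_combination Azz
  · linear_combination Az1th2
  · linear_combination Az2th1
  · linear_combination Ath1sq
  · linear_combination Athth

def gM : M →ₗ[ANode] ANode :=
  omegaRelMod.liftQ G0 (by
    rw [omegaRelMod, Submodule.span_le]
    intro r hr
    exact G0_rels r hr)

lemma gs0 : gM (s 0) = z1 := by simp [gM, s, Submodule.liftQ_apply, G0, ee, Pi.single_apply]
lemma gs1 : gM (s 1) = tb := by simp [gM, s, Submodule.liftQ_apply, G0, ee, Pi.single_apply]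
lemma gs2 : gM (s 2) = th1 := by simp [gM, s, Submodule.liftQ_apply, G0, ee, Pi.single_apply]

def PhiL : ANode →ₗ[Ct] R5 where
  toFun := Phi
  map_add' := map_add Phi
  map_smul' p x := by
    simp only [RingHom.id_apply]
    rw [Algebra.smul_def, map_mul, Phi_algebraMap, ← Algebra.smul_def]

def psi : M →ₗ[Ct] R5 := PhiL ∘ₗ (gM.restrictScalars Ct)

lemma tLpow (k : ℕ) : tL ^ k = LaurentPolynomial.C (Polynomial.X ^ k : Ct) := by
  rw [tL, map_pow]

def G2 : Bool → ℤ → Ct → R5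
  | true, k, c => inr (LaurentPolynomial.C c * T k)
  | false, k, c => inl (LaurentPolynomial.C c * T k)

def kIdx : BasisIdx → Bool × ℤ
  | Sum.inl _ => (true, 1)
  | Sum.inr (Sum.inl n) => (false, (n : ℤ) + 1)
  | Sum.inr (Sum.inr (Sum.inl n)) => (false, -(n : ℤ))
  | Sum.inr (Sum.inr (Sum.inr (Sum.inl n))) => (true, (n : ℤ) + 2)
  | Sum.inr (Sum.inr (Sum.inr (Sum.inr n))) => (true, -(n : ℤ))

def cIdx : BasisIdx → Ct
  | Sum.inl _ => 1
  | Sum.inr (Sum.inl _) => 1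
  | Sum.inr (Sum.inr (Sum.inl n)) => (-1 : Ct) ^ n * Polynomial.X ^ (2 * n + 1)
  | Sum.inr (Sum.inr (Sum.inr (Sum.inl _))) => 1
  | Sum.inr (Sum.inr (Sum.inr (Sum.inr n))) => (-1 : Ct) ^ n * Polynomial.X ^ (2 * n + 2)

lemma negtL2pow (n : ℕ) : ((-LaurentPolynomial.C (Polynomial.X : Ct) ^ 2 * T (-1) : L)) ^ n
    = (-1 : L)^n * LaurentPolynomial.C (Polynomial.X : Ct) ^ (2*n) * T (-(n:ℤ)) := by
  induction n with
  | zero => simp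
  | succ n ih =>
      rw [pow_succ, ih, show (-(↑(n+1):ℤ)) = -(n:ℤ) + -1 by push_cast; ring, T_add,
        pow_succ, pow_succ]
      ring

lemma CT_nf (a : Ct) (m k : ℤ) (c : Ct) (h1 : a = c) (h2 : m = k) :
    LaurentPolynomial.C a * T m = LaurentPolynomial.C c * T k := by rw [h1, h2]

lemma psi_mBasis (i : BasisIdx) : psi (mBasis i) = G2 (kIdx i).1 (kIdx i).2 (cIdx i) := by
  obtain (_|n|n|n|n) := i <;>
    simp only [psi, mBasis, kIdx, cIdx, G2, LinearMap.comp_apply, LinearMap.coe_restrictScalars,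
      map_smul, PhiL, LinearMap.coe_mk, AddHom.coe_mk, gs0, gs1, gs2, smul_eq_mul, map_mul,
      map_pow, Phi_t, Phi_z1, Phi_z2, Phi_th1, Phi_th2, inl_pow, inl_mul_inl, inl_mul_inr,
      inr_mul_inl, smul_eq_mul, MulOpposite.smul_eq_mul_unop, MulOpposite.unop_op, T_pow,
      negtL2pow, tL, map_one, one_mul]
  · congr 1
    rw [← T_add]
    congr 1
    omega
  · refine congrArg inl ?_
    simp only [map_neg, map_one]
    ring
  · congr 1
    rw [← T_add, ← T_add]
    congr 1
    omega
  · refine congrArg inr ?_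
    simp only [map_neg, map_one]
    ring

def Efun (b : Bool) (k : ℤ) : R5 →ₗ[Ct] Ct where
  toFun x := (cond b (snd x) (fst x)).coeff k
  map_add' x y := by
    cases b <;> simp only [fst_add, snd_add, Bool.cond_false, Bool.cond_true] <;>
      exact Finsupp.add_apply ..
  map_smul' c x := by
    cases b <;> simp only [fst_smul, snd_smul, RingHom.id_apply, Bool.cond_false, Bool.cond_true] <;>
      rw [AddMonoidAlgebra.coeff_smul_apply, smul_eq_mul]

lemma E_G2 (b b' : Bool) (k m : ℤ) (c : Ct) :
    Efun b k (G2 b' m c) = if b = b' ∧ m = k then c else 0 := by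
  cases b <;> cases b' <;>
    simp [Efun, G2, ← single_eq_C_mul_T, Finsupp.single_apply]

lemma cIdx_ne_zero (i : BasisIdx) : cIdx i ≠ 0 := by
  obtain (_|n|n|n|n) := i <;>
    simp only [cIdx] <;>
    first
      | exact one_ne_zero
      | exact mul_ne_zero (pow_ne_zero _ (neg_ne_zero.2 one_ne_zero))
          (pow_ne_zero _ Polynomial.X_ne_zero)

lemma kIdx_inj : Function.Injective kIdx := by
  intro i j h
  obtain (u|n|n|n|n) := i <;> obtain (v|m|m|m|m) := j <;>
    simp only [kIdx, Prod.mk.injEq, Bool.true_eq_false, Bool.false_eq_true, false_and,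
      true_and, and_false] at h <;>
    first
      | rfl
      | exact absurd h (by omega)
      | (have hnm : n = m := by omega
         subst hnm
         rfl)
      | (exfalso; omega)

lemma indep_main : LinearIndependent Ct (fun i => G2 (kIdx i).1 (kIdx i).2 (cIdx i)) := by
  rw [linearIndependent_iff']
  intro ss lam h i hi
  have hE := congrArg (Efun (kIdx i).1 (kIdx i).2) h
  rw [map_sum, map_zero] at hE
  simp only [map_smul, smul_eq_mul] at hE
  rw [Finset.sum_eq_single_of_mem i hi (fun j _ hji => by
    rw [E_G2, if_neg, mul_zero]
    rintro ⟨hb, hk⟩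
    exact hji (kIdx_inj (Prod.ext hb.symm hk)))] at hE
  rw [E_G2, if_pos ⟨rfl, rfl⟩] at hE
  rcases mul_eq_zero.1 hE with h'|h'
  · exact h'
  · exact absurd h' (cIdx_ne_zero i)

lemma part1 : LinearIndependent Ct mBasis := by
  apply LinearIndependent.of_comp psi
  have : (psi ∘ mBasis) = fun i => G2 (kIdx i).1 (kIdx i).2 (cIdx i) := funext psi_mBasis
  rw [this]
  exact indep_main

lemma relMem (v : Fin 3 → ANode) (hv : v ∈ omegaRels) :
    (Submodule.Quotient.mk v : M) = 0 :=
  (Submodule.Quotient.mk_eq_zero _).2 (Submodule.subset_span hv)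

lemma rel_of_sub (a b : Fin 3 → ANode) (h : (Submodule.Quotient.mk (a - b) : M) = 0) :
    (Submodule.Quotient.mk a : M) = Submodule.Quotient.mk b := by
  rwa [Submodule.Quotient.mk_sub, sub_eq_zero] at h

lemma r1 : z1 • s 1 = tb • s 0 := by
  have := rel_of_sub _ _ (relMem _ (show z1 • ee 1 - tb • ee 0 ∈ omegaRels from by
    rw [omegaRels]; left; rfl))
  simpa [s, Submodule.Quotient.mk_smul] using this

lemma r2 : z2 • s 0 = -(tb • s 1) := by
  have := relMem _ (show z2 • ee 0 + tb • ee 1 ∈ omegaRels from by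
    rw [omegaRels]; right; left; rfl)
  rw [Submodule.Quotient.mk_add, Submodule.Quotient.mk_smul, Submodule.Quotient.mk_smul,
    add_eq_zero_iff_eq_neg] at this
  exact this

lemma r3 : th1 • s 1 = tb • s 2 := by
  have := rel_of_sub _ _ (relMem _ (show th1 • ee 1 - tb • ee 2 ∈ omegaRels from by
    rw [omegaRels]; right; right; left; rfl))
  simpa [s, Submodule.Quotient.mk_smul] using this

lemma r4 : th2 • s 0 = tb • s 2 := by
  have := rel_of_sub _ _ (relMem _ (show th2 • ee 0 - tb • ee 2 ∈ omegaRels from by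
    rw [omegaRels]; right; right; right; left; rfl))
  simpa [s, Submodule.Quotient.mk_smul] using this

lemma r5 : z1 • s 2 = th1 • s 0 := by
  have := rel_of_sub _ _ (relMem _ (show z1 • ee 2 - th1 • ee 0 ∈ omegaRels from by
    rw [omegaRels]; right; right; right; right; left; rfl))
  simpa [s, Submodule.Quotient.mk_smul] using this

lemma r6 : z2 • s 2 = -(th2 • s 1) := by
  have := relMem _ (show z2 • ee 2 + th2 • ee 1 ∈ omegaRels from by
    rw [omegaRels]; right; right; right; right; right; left; rfl)
  rw [Submodule.Quotient.mk_add, Submodule.Quotient.mk_smul, Submodule.Quotient.mk_smul,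
    add_eq_zero_iff_eq_neg] at this
  exact this

lemma r7 : th1 • s 2 = 0 := by
  have := relMem _ (show th1 • ee 2 ∈ omegaRels from by
    rw [omegaRels]; right; right; right; right; right; right; left; rfl)
  rw [Submodule.Quotient.mk_smul] at this
  exact this

lemma r8 : th2 • s 2 = 0 := by
  have := relMem _ (show th2 • ee 2 ∈ omegaRels from by
    rw [omegaRels]; right; right; right; right; right; right; right; rfl)
  rw [Submodule.Quotient.mk_smul] at this
  exact this

lemma algMap_X : algebraMap Ct ANode Polynomial.X = tb := by
  show Polynomial.aeval tb Polynomial.X = tb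
  simp

lemma algMap_C (a : ℂ) :
    algebraMap Ct ANode (Polynomial.C a) = Ideal.Quotient.mk nsIdeal (C a) := by
  show Polynomial.aeval tb (Polynomial.C a) = _
  simp [Polynomial.aeval_C]
  rfl

lemma tb_smul (x : M) : tb • x = (Polynomial.X : Ct) • x := by
  rw [← algMap_X, algebraMap_smul]

lemma tb2_smul (x : M) : (tb^2 : ANode) • x = ((Polynomial.X^2 : Ct)) • x := by
  rw [← algMap_X, ← map_pow, algebraMap_smul]

lemma Azz' : z1 * z2 = -(tb^2) := by linear_combination Azz
lemma Az1th2' : z1 * th2 = tb * th1 := by linear_combination Az1th2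
lemma Az2th1' : z2 * th1 = -(tb * th2) := by linear_combination Az2th1

def NN : Submodule Ct M := Submodule.span Ct (Set.range mBasis)

lemma memNN (i : BasisIdx) : mBasis i ∈ NN := Submodule.subset_span ⟨i, rfl⟩
lemma s0_mem : s 0 ∈ NN := by simpa [mBasis] using memNN (Sum.inr (Sum.inl 0))
lemma s1_mem : s 1 ∈ NN := by simpa [mBasis] using memNN (Sum.inr (Sum.inr (Sum.inl 0)))
lemma s2_mem : s 2 ∈ NN := memNN (Sum.inl ())

lemma Msmul (a b : ANode) (x : M) : a • b • x = (a * b) • x := smul_smul a b x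

lemma Mneg (a : ANode) (x : M) : (-a) • x = -(a • x) := neg_smul a x

lemma Mzero (x : M) : (0 : ANode) • x = 0 := zero_smul ANode x

lemma AnegMul (a b : ANode) : -a * b = -(a * b) := neg_mul a b

lemma negt2_smul (a : ANode) (x : M) :
    (-(tb^2) * a) • x = -((Polynomial.X^2 : Ct) • (a • x)) := by
  rw [← Msmul, Mneg, tb2_smul]

lemma smul_closure (a : ANode) (hgen : ∀ i, a • mBasis i ∈ NN) : ∀ y ∈ NN, a • y ∈ NN := by
  intro y hy
  induction hy using Submodule.span_induction with
  | mem x hx => obtain ⟨i, rfl⟩ := hx; exact hgen i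
  | zero => rw [smul_zero]; exact zero_mem _
  | add x y _ _ ihx ihy => rw [smul_add]; exact add_mem ihx ihy
  | smul p x _ ih =>
      rw [← algebraMap_smul ANode p x, Msmul, mul_comm, ← Msmul, algebraMap_smul]
      exact NN.smul_mem p ih

lemma z1_gen : ∀ i, z1 • mBasis i ∈ NN := by
  rintro (_|n|n|n|n)
  · show z1 • s 2 ∈ NN
    rw [r5]
    simpa [mBasis] using memNN (Sum.inr (Sum.inr (Sum.inr (Sum.inl 0))))
  · show z1 • (z1 ^ n • s 0) ∈ NN
    rw [Msmul, show z1 * z1 ^ n = z1 ^ (n+1) by ring]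
    exact memNN (Sum.inr (Sum.inl (n+1)))
  · show z1 • (z2 ^ n • s 1) ∈ NN
    cases n with
    | zero =>
        simp only [pow_zero, one_smul]
        rw [r1, tb_smul]
        exact NN.smul_mem _ s0_mem
    | succ n =>
        rw [Msmul, show z1 * z2 ^ (n+1) = -(tb^2) * z2 ^ n by
          linear_combination z2 ^ n * Azz, negt2_smul]
        exact neg_mem (NN.smul_mem _ (memNN (Sum.inr (Sum.inr (Sum.inl n)))))
  · show z1 • ((z1 ^ n * th1) • s 0) ∈ NN
    rw [Msmul, show z1 * (z1 ^ n * th1) = z1 ^ (n+1) * th1 by ring]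
    exact memNN (Sum.inr (Sum.inr (Sum.inr (Sum.inl (n+1)))))
  · show z1 • ((z2 ^ n * th2) • s 1) ∈ NN
    cases n with
    | zero =>
        simp only [pow_zero, one_mul]
        rw [Msmul, Az1th2', ← Msmul, r3, tb_smul, tb_smul]
        exact NN.smul_mem _ (NN.smul_mem _ s2_mem)
    | succ n =>
        rw [Msmul, show z1 * (z2 ^ (n+1) * th2) = -(tb^2) * (z2 ^ n * th2) by
          linear_combination (z2 ^ n * th2) * Azz, negt2_smul]
        exact neg_mem (NN.smul_mem _ (memNN (Sum.inr (Sum.inr (Sum.inr (Sum.inr n))))))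

lemma z2_gen : ∀ i, z2 • mBasis i ∈ NN := by
  rintro (_|n|n|n|n)
  · show z2 • s 2 ∈ NN
    rw [r6]
    refine neg_mem ?_
    simpa [mBasis] using memNN (Sum.inr (Sum.inr (Sum.inr (Sum.inr 0))))
  · show z2 • (z1 ^ n • s 0) ∈ NN
    cases n with
    | zero =>
        simp only [pow_zero, one_smul]
        rw [r2, tb_smul]
        exact neg_mem (NN.smul_mem _ s1_mem)
    | succ n =>
        rw [Msmul, show z2 * z1 ^ (n+1) = -(tb^2) * z1 ^ n by
          linear_combination z1 ^ n * Azz, negt2_smul]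
        exact neg_mem (NN.smul_mem _ (memNN (Sum.inr (Sum.inl n))))
  · show z2 • (z2 ^ n • s 1) ∈ NN
    rw [Msmul, show z2 * z2 ^ n = z2 ^ (n+1) by ring]
    exact memNN (Sum.inr (Sum.inr (Sum.inl (n+1))))
  · show z2 • ((z1 ^ n * th1) • s 0) ∈ NN
    cases n with
    | zero =>
        simp only [pow_zero, one_mul]
        rw [Msmul, Az2th1', Mneg, ← Msmul, r4, tb_smul, tb_smul]
        exact neg_mem (NN.smul_mem _ (NN.smul_mem _ s2_mem))
    | succ n =>
        rw [Msmul, show z2 * (z1 ^ (n+1) * th1) = -(tb^2) * (z1 ^ n * th1) by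
          linear_combination (z1 ^ n * th1) * Azz, negt2_smul]
        exact neg_mem (NN.smul_mem _ (memNN (Sum.inr (Sum.inr (Sum.inr (Sum.inl n))))))
  · show z2 • ((z2 ^ n * th2) • s 1) ∈ NN
    rw [Msmul, show z2 * (z2 ^ n * th2) = z2 ^ (n+1) * th2 by ring]
    exact memNN (Sum.inr (Sum.inr (Sum.inr (Sum.inr (n+1)))))

lemma th1_gen : ∀ i, th1 • mBasis i ∈ NN := by
  rintro (_|n|n|n|n)
  · show th1 • s 2 ∈ NN
    rw [r7]; exact zero_mem _
  · show th1 • (z1 ^ n • s 0) ∈ NN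
    rw [Msmul, mul_comm]
    exact memNN (Sum.inr (Sum.inr (Sum.inr (Sum.inl n))))
  · show th1 • (z2 ^ n • s 1) ∈ NN
    cases n with
    | zero =>
        simp only [pow_zero, one_smul]
        rw [r3, tb_smul]
        exact NN.smul_mem _ s2_mem
    | succ n =>
        rw [Msmul, show th1 * z2 ^ (n+1) = -tb * (z2 ^ n * th2) by
          linear_combination z2 ^ n * Az2th1, AnegMul, Mneg, ← Msmul, tb_smul]
        exact neg_mem (NN.smul_mem _ (memNN (Sum.inr (Sum.inr (Sum.inr (Sum.inr n))))))
  · show th1 • ((z1 ^ n * th1) • s 0) ∈ NN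
    rw [Msmul, show th1 * (z1 ^ n * th1) = 0 by linear_combination z1 ^ n * Ath1sq,
      Mzero]
    exact zero_mem _
  · show th1 • ((z2 ^ n * th2) • s 1) ∈ NN
    rw [Msmul, show th1 * (z2 ^ n * th2) = 0 by linear_combination z2 ^ n * Athth,
      Mzero]
    exact zero_mem _

lemma th2_gen : ∀ i, th2 • mBasis i ∈ NN := by
  rintro (_|n|n|n|n)
  · show th2 • s 2 ∈ NN
    rw [r8]; exact zero_mem _
  · show th2 • (z1 ^ n • s 0) ∈ NN
    cases n with
    | zero =>
        simp only [pow_zero, one_smul]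
        rw [r4, tb_smul]
        exact NN.smul_mem _ s2_mem
    | succ n =>
        rw [Msmul, show th2 * z1 ^ (n+1) = tb * (z1 ^ n * th1) by
          linear_combination z1 ^ n * Az1th2, ← Msmul, tb_smul]
        exact NN.smul_mem _ (memNN (Sum.inr (Sum.inr (Sum.inr (Sum.inl n)))))
  · show th2 • (z2 ^ n • s 1) ∈ NN
    rw [Msmul, mul_comm]
    exact memNN (Sum.inr (Sum.inr (Sum.inr (Sum.inr n))))
  · show th2 • ((z1 ^ n * th1) • s 0) ∈ NN
    rw [Msmul, show th2 * (z1 ^ n * th1) = 0 by linear_combination z1 ^ n * Athth,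
      Mzero]
    exact zero_mem _
  · show th2 • ((z2 ^ n * th2) • s 1) ∈ NN
    rw [Msmul, show th2 * (z2 ^ n * th2) = 0 by linear_combination z2 ^ n * Ath2sq,
      Mzero]
    exact zero_mem _

lemma Madd_smul (a b : ANode) (x : M) : (a + b) • x = a • x + b • x := add_smul a b x

lemma X_smul_mem (i : Fin 5) (y : M) (hy : y ∈ NN) :
    (Ideal.Quotient.mk nsIdeal (X i)) • y ∈ NN := by
  fin_cases i
  · show tb • y ∈ NN
    rw [tb_smul]; exact NN.smul_mem _ hy
  · exact smul_closure z1 z1_gen y hy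
  · exact smul_closure z2 z2_gen y hy
  · exact smul_closure th1 th1_gen y hy
  · exact smul_closure th2 th2_gen y hy

lemma poly_smul : ∀ (p : P5) (y : M), y ∈ NN → (Ideal.Quotient.mk nsIdeal p) • y ∈ NN := by
  intro p
  induction p using MvPolynomial.induction_on with
  | C a =>
      intro y hy
      have h : (Ideal.Quotient.mk nsIdeal (C a)) • y = (Polynomial.C a : Ct) • y := by
        rw [← algMap_C, algebraMap_smul]
      rw [h]; exact NN.smul_mem _ hy
  | add p q hp hq =>
      intro y hy
      rw [map_add, Madd_smul]
      exact add_mem (hp y hy) (hq y hy)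
  | mul_X p i hp =>
      intro y hy
      rw [map_mul, ← Msmul]
      exact hp _ (X_smul_mem i y hy)

lemma part2 : Submodule.span Ct (Set.range mBasis) = ⊤ := by
  rw [eq_top_iff]
  rintro x -
  obtain ⟨f, rfl⟩ := Submodule.Quotient.mk_surjective omegaRelMod x
  have hf : f = f 0 • ee 0 + (f 1 • ee 1 + f 2 • ee 2) := by
    funext j
    fin_cases j <;> simp [ee, Pi.single_apply]
  rw [hf, Submodule.Quotient.mk_add, Submodule.Quotient.mk_add, Submodule.Quotient.mk_smul,
    Submodule.Quotient.mk_smul, Submodule.Quotient.mk_smul]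
  show _ ∈ NN
  refine add_mem ?_ (add_mem ?_ ?_)
  · obtain ⟨p, hp⟩ := Ideal.Quotient.mk_surjective (I := nsIdeal) (f 0)
    rw [← hp]
    exact poly_smul p _ s0_mem
  · obtain ⟨p, hp⟩ := Ideal.Quotient.mk_surjective (I := nsIdeal) (f 1)
    rw [← hp]
    exact poly_smul p _ s1_mem
  · obtain ⟨p, hp⟩ := Ideal.Quotient.mk_surjective (I := nsIdeal) (f 2)
    rw [← hp]
    exact poly_smul p _ s2_mem

/-- the local model `M` of `ω_{X/S}` is a free `ℂ[t]`-module with basis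
`z̄₁ⁿ·s₁, z̄₂ⁿ·s₂, z̄₁ⁿθ̄₁·s₁, z̄₂ⁿθ̄₂·s₂ (n ≥ 0)` together with `s₀`. -/
theorem omegaModule_free_over_Ct :
    LinearIndependent (Polynomial ℂ) mBasis ∧
      Submodule.span (Polynomial ℂ) (Set.range mBasis) = ⊤ := by
  exact ⟨part1, part2⟩

end
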